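/- The image Δ((0, ∞)) = {Δ(α) : α > 0} has Lebesgue measure zero. -/

import Mathlib

open Filter

/-- The digit sequence `u_α`: with `b = ⌈α⌉`, `u_α n = (b−1) + ⌈(α−b+1)(n+1)⌉ − ⌈(α−b+1)n⌉`,
the upper mechanical word of slope `α − b + 1` written over the alphabet `{b−1, b}`. -/
noncomputable def upperWord (α : ℝ) (n : ℕ) : ℤ :=
  (⌈α⌉ - 1) + (⌈(α - ⌈α⌉ + 1) * ((n : ℝ) + 1)⌉ - ⌈(α - ⌈α⌉ + 1) * (n : ℝ)⌉)

/-- `Δ` is the devil's staircase function: `Δ 0 = 1` and, for each `α > 0`, `Δ α` is the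
unique real `β > 1` satisfying `∑_{n=0}^∞ u_α(n)·β^{−(n+1)} = 1`. -/
def IsDevilStaircase (Δ : ℝ → ℝ) : Prop :=
  Δ 0 = 1 ∧ ∀ α : ℝ, 0 < α →
    (1 < Δ α ∧ ∑' n : ℕ, (upperWord α n : ℝ) / (Δ α) ^ (n + 1) = 1) ∧
    ∀ β : ℝ, 1 < β → (∑' n : ℕ, (upperWord α n : ℝ) / β ^ (n + 1) = 1) → β = Δ α

section aux
set_option maxHeartbeats 1000000



variable {α : ℝ} (hα : 0 < α)

lemma slope_pos : 0 < α - ⌈α⌉ + 1 := by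
  have := Int.ceil_lt_add_one α; linarith

lemma slope_le_one : α - ⌈α⌉ + 1 ≤ 1 := by
  have := Int.le_ceil α; linarith

include hα in
lemma ceil_ge_one : (1 : ℤ) ≤ ⌈α⌉ := Int.ceil_pos.mpr hα

lemma upperWord_nonneg (hα : 0 < α) (n : ℕ) : 0 ≤ upperWord α n := by
  have h1 : (⌈(α - ⌈α⌉ + 1) * (n : ℝ)⌉ : ℤ) ≤ ⌈(α - ⌈α⌉ + 1) * ((n : ℝ) + 1)⌉ := by
    apply Int.ceil_le_ceil
    have := (slope_pos (α := α)).le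
    nlinarith
  have := ceil_ge_one hα
  unfold upperWord; omega

lemma upperWord_le (n : ℕ) : upperWord α n ≤ ⌈α⌉ := by
  have h1 : (⌈(α - ⌈α⌉ + 1) * ((n : ℝ) + 1)⌉ : ℤ) ≤ ⌈(α - ⌈α⌉ + 1) * (n : ℝ)⌉ + 1 := by
    rw [← Int.ceil_add_one]
    apply Int.ceil_le_ceil
    have := slope_le_one (α := α)
    nlinarith [slope_pos (α := α)]
  unfold upperWord; omega

lemma upperWord_zero : upperWord α 0 = ⌈α⌉ := by
  unfold upperWord
  norm_num


lemma geom_tail {β : ℝ} (hβ : 1 < β) : ∑' n : ℕ, (β⁻¹)^(n+1) = (β - 1)⁻¹ := by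
  have h0 : β⁻¹ < 1 := inv_lt_one_of_one_lt₀ hβ
  have h1 : (0:ℝ) ≤ β⁻¹ := by positivity
  have hb : (0:ℝ) < β := by linarith
  calc ∑' n : ℕ, (β⁻¹)^(n+1) = ∑' n : ℕ, β⁻¹ * (β⁻¹)^n := by
        congr 1; ext n; ring
    _ = β⁻¹ * (1 - β⁻¹)⁻¹ := by rw [tsum_mul_left, tsum_geometric_of_lt_one h1 h0]
    _ = (β - 1)⁻¹ := by
        rw [← mul_inv]
        congr 1
        field_simp

lemma summable_geom_shift {β : ℝ} (hβ : 1 < β) (c : ℝ) :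
    Summable (fun n : ℕ => c * (β⁻¹)^(n+1)) := by
  have h0 : |β⁻¹| < 1 := by
    rw [abs_of_nonneg (by positivity)]; exact inv_lt_one_of_one_lt₀ hβ
  exact (((summable_geometric_of_abs_lt_one h0).mul_left β⁻¹).congr
    (fun n => by ring)).mul_left c

section series
variable {u : ℕ → ℝ} {k β : ℝ}

lemma summable_series (hβ : 1 < β) (hu : ∀ n, |u n| ≤ k) :
    Summable (fun n : ℕ => u n / β^(n+1)) := by
  have hb : (0:ℝ) < β := by linarith
  apply (summable_geom_shift hβ k).of_norm_bounded
  intro n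
  rw [Real.norm_eq_abs, abs_div, abs_of_pos (pow_pos hb _), div_eq_mul_inv, ← inv_pow]
  have : (0:ℝ) ≤ (β⁻¹)^(n+1) := by positivity
  exact mul_le_mul_of_nonneg_right ((hu n).trans (le_abs_self k)) this |>.trans
    (le_of_eq (by rw [abs_of_nonneg ((abs_nonneg (u 0)).trans (hu 0))]))

-- upper bound on β from tsum = 1
lemma beta_le (hβ : 1 < β) (hu : ∀ n, |u n| ≤ k)
    (h1 : ∑' n : ℕ, u n / β^(n+1) = 1) : β ≤ k + 1 := by
  have hb : (0:ℝ) < β := by linarith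
  have hle : (1:ℝ) ≤ k * (β-1)⁻¹ := by
    calc (1:ℝ) = ∑' n : ℕ, u n / β^(n+1) := h1.symm
      _ ≤ ∑' n : ℕ, k * (β⁻¹)^(n+1) := by
          apply Summable.tsum_le_tsum _ (summable_series hβ hu) (summable_geom_shift hβ k)
          intro n
          rw [div_eq_mul_inv, ← inv_pow]
          exact mul_le_mul_of_nonneg_right ((le_abs_self _).trans (hu n)) (by positivity)
      _ = k * (β-1)⁻¹ := by rw [tsum_mul_left, geom_tail hβ]
  have hβ1 : (0:ℝ) < β - 1 := by linarith
  rw [← div_eq_mul_inv, le_div_iff₀ hβ1] at hle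
  linarith
  
end series

lemma tail_diff {u u' : ℕ → ℝ} {k β : ℝ} (hβ : 1 < β) (n : ℕ)
    (hu : ∀ i, |u i| ≤ k) (hu' : ∀ i, |u' i| ≤ k)
    (hd : ∀ i, |u i - u' i| ≤ k) (hpre : ∀ i < n, u i = u' i) :
    |(∑' i : ℕ, u i / β^(i+1)) - ∑' i : ℕ, u' i / β^(i+1)|
      ≤ k * (β⁻¹)^n * (β - 1)⁻¹ := by
  have hb : (0:ℝ) < β := by linarith
  have hs : Summable (fun i : ℕ => u i / β^(i+1)) := summable_series hβ hu
  have hs' : Summable (fun i : ℕ => u' i / β^(i+1)) := summable_series hβ hu'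
  have hsn : Summable (fun i : ℕ => u (i+n) / β^((i+n)+1)) :=
    ((summable_nat_add_iff n).mpr hs)
  have hsn' : Summable (fun i : ℕ => u' (i+n) / β^((i+n)+1)) :=
    ((summable_nat_add_iff n).mpr hs')
  have e1 := (Summable.sum_add_tsum_nat_add (f := fun i : ℕ => u i / β^(i+1)) n hs).symm
  have e2 := (Summable.sum_add_tsum_nat_add (f := fun i : ℕ => u' i / β^(i+1)) n hs').symm
  have epre : ∑ i ∈ Finset.range n, u i / β^(i+1)
      = ∑ i ∈ Finset.range n, u' i / β^(i+1) := by
    apply Finset.sum_congr rfl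
    intro i hi
    rw [hpre i (Finset.mem_range.mp hi)]
  have key : (∑' i : ℕ, u i / β^(i+1)) - ∑' i : ℕ, u' i / β^(i+1)
      = ∑' i : ℕ, (u (i+n) / β^((i+n)+1) - u' (i+n) / β^((i+n)+1)) := by
    rw [e1, e2, epre, Summable.tsum_sub hsn hsn']
    ring
  rw [key]
  have hnorm : ∀ i : ℕ, ‖u (i+n) / β^((i+n)+1) - u' (i+n) / β^((i+n)+1)‖
      ≤ (k * (β⁻¹)^n) * (β⁻¹)^(i+1) := by
    intro i
    rw [Real.norm_eq_abs, div_sub_div_same, abs_div, abs_of_pos (pow_pos hb _)]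
    have h2 : (β:ℝ)^((i+n)+1) = β^n * β^(i+1) := by rw [← pow_add]; ring_nf
    rw [h2]
    rw [div_le_iff₀ (by positivity)]
    have : k * (β⁻¹)^n * (β⁻¹)^(i+1) * (β^n * β^(i+1)) = k := by
      rw [inv_pow, inv_pow]
      field_simp
    rw [this]
    exact hd _
  calc |∑' i : ℕ, (u (i+n) / β^((i+n)+1) - u' (i+n) / β^((i+n)+1))|
      ≤ ∑' i : ℕ, (k * (β⁻¹)^n) * (β⁻¹)^(i+1) := by
        rw [← Real.norm_eq_abs]
        have hn2 : Summable (fun i : ℕ => ‖u (i+n) / β^((i+n)+1) - u' (i+n) / β^((i+n)+1)‖) :=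
          (hsn.sub hsn').abs
        exact (norm_tsum_le_tsum_norm hn2).trans
          (Summable.tsum_le_tsum hnorm hn2 (summable_geom_shift hβ _))
    _ = k * (β⁻¹)^n * (β - 1)⁻¹ := by
        rw [tsum_mul_left, geom_tail hβ]

lemma lipschitz_lower {u : ℕ → ℝ} {k B x y : ℝ}
    (hu0 : 1 ≤ u 0) (hupos : ∀ i, 0 ≤ u i) (hu : ∀ i, |u i| ≤ k)
    (hx : 1 < x) (hy : 1 < y) (hxB : x ≤ B) (hyB : y ≤ B) :
    |x - y| ≤ B^2 * |(∑' i : ℕ, u i / x^(i+1)) - ∑' i : ℕ, u i / y^(i+1)| := by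
  have hmain : ∀ a b : ℝ, 1 < a → 1 < b → a ≤ B → b ≤ B → a ≤ b →
      |a - b| ≤ B^2 * |(∑' i : ℕ, u i / a^(i+1)) - ∑' i : ℕ, u i / b^(i+1)| := by
    intro a b ha hb haB hbB hab
    have ha0 : (0:ℝ) < a := by linarith
    have hb0 : (0:ℝ) < b := by linarith
    have hsa : Summable (fun i : ℕ => u i / a^(i+1)) := summable_series ha hu
    have hsb : Summable (fun i : ℕ => u i / b^(i+1)) := summable_series hb hu
    have hterm : ∀ i : ℕ, 0 ≤ u i / a^(i+1) - u i / b^(i+1) := by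
      intro i
      have : a^(i+1) ≤ b^(i+1) := pow_le_pow_left₀ ha0.le hab _
      have h1 : u i / b^(i+1) ≤ u i / a^(i+1) := by
        gcongr
        exact hupos i
      linarith
    have hfs : Summable (fun i : ℕ => u i / a^(i+1) - u i / b^(i+1)) := hsa.sub hsb
    have h0le : u 0 / a^(0+1) - u 0 / b^(0+1)
        ≤ ∑' i : ℕ, (u i / a^(i+1) - u i / b^(i+1)) :=
      hfs.le_tsum 0 (fun j _ => hterm j)
    have hsum_eq : (∑' i : ℕ, u i / a^(i+1)) - ∑' i : ℕ, u i / b^(i+1)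
        = ∑' i : ℕ, (u i / a^(i+1) - u i / b^(i+1)) := (Summable.tsum_sub hsa hsb).symm
    have hlow : (b - a) / B^2 ≤ u 0 / a^(0+1) - u 0 / b^(0+1) := by
      norm_num
      rw [div_sub_div _ _ (ne_of_gt ha0) (ne_of_gt hb0)]
      rw [div_le_div_iff₀ (by nlinarith : (0:ℝ) < B^2) (mul_pos ha0 hb0)]
      have hba : (0:ℝ) ≤ b - a := by linarith
      have h2 : (0:ℝ) ≤ u 0 * B^2 - a*b := by nlinarith
      nlinarith [mul_nonneg hba h2]
    have hdle : (b - a) / B^2 ≤ (∑' i : ℕ, u i / a^(i+1)) - ∑' i : ℕ, u i / b^(i+1) := by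
      rw [hsum_eq]; linarith
    have hB0 : (0:ℝ) < B := by linarith
    have hba : (0:ℝ) ≤ b - a := by linarith
    calc |a - b| = b - a := by rw [abs_sub_comm, abs_of_nonneg hba]
      _ ≤ B^2 * ((∑' i : ℕ, u i / a^(i+1)) - ∑' i : ℕ, u i / b^(i+1)) := by
          rw [div_le_iff₀ (by positivity)] at hdle
          linarith
      _ ≤ B^2 * |(∑' i : ℕ, u i / a^(i+1)) - ∑' i : ℕ, u i / b^(i+1)| := by
          have := le_abs_self ((∑' i : ℕ, u i / a^(i+1)) - ∑' i : ℕ, u i / b^(i+1))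
          nlinarith
  rcases le_total x y with h | h
  · exact hmain x y hx hy hxB hyB h
  · rw [abs_sub_comm, abs_sub_comm (∑' i : ℕ, u i / x^(i+1))]
    exact hmain y x hy hx hyB hxB h
lemma exists_rep {s : ℝ} (hs0 : 0 < s) (hs1 : s ≤ 1) (n : ℕ) (hn : 1 ≤ n) :
    ∃ p : ℕ × ℕ, p ∈ Finset.Icc 1 n ×ˢ Finset.Icc 1 n ∧
      0 < ((p.2:ℝ)/p.1) ∧ ((p.2:ℝ)/p.1) ≤ 1 ∧
      ∀ m : ℕ, m ≤ n → ⌈s * m⌉ = ⌈((p.2:ℝ)/p.1) * m⌉ := by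
  classical
  set T : Finset (ℕ × ℕ) :=
    (Finset.Icc 1 n ×ˢ Finset.Icc 1 n).filter
      (fun p => p.2 ≤ p.1 ∧ s ≤ (p.2:ℝ)/p.1) with hT
  have hTne : T.Nonempty := by
    refine ⟨(1,1), ?_⟩
    simp [hT, Finset.mem_filter, Finset.mem_product, hn]
    exact hs1.trans (by norm_num)
  set F : Finset ℝ := T.image (fun p => (p.2:ℝ)/p.1) with hF
  have hFne : F.Nonempty := hTne.image _
  set q : ℝ := F.min' hFne with hq
  have hqmem : q ∈ F := F.min'_mem hFne
  obtain ⟨p, hpT, hpq⟩ := Finset.mem_image.mp hqmem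
  obtain ⟨hpmem, hple, hsq⟩ := Finset.mem_filter.mp hpT
  obtain ⟨hp1, hp2⟩ := Finset.mem_product.mp hpmem
  have hi1 : 1 ≤ p.1 := (Finset.mem_Icc.mp hp1).1
  have hj1 : 1 ≤ p.2 := (Finset.mem_Icc.mp hp2).1
  have hi0 : (0:ℝ) < p.1 := by exact_mod_cast Nat.lt_of_lt_of_le Nat.zero_lt_one hi1
  refine ⟨p, hpmem, by positivity, ?_, ?_⟩
  · rw [div_le_one hi0]; exact_mod_cast hple
  · intro m hm
    rcases Nat.eq_zero_or_pos m with rfl | hm1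
    · norm_num
    have hsq' : s ≤ (p.2:ℝ)/p.1 := hsq
    apply le_antisymm
    ·
      apply Int.ceil_le_ceil
      have : (0:ℝ) ≤ (m:ℝ) := by positivity
      nlinarith
    · -- other direction via minimality
      set j' : ℕ := (⌈s * m⌉).toNat with hj'
      have hceil_pos : (1:ℤ) ≤ ⌈s * m⌉ := by
        apply Int.ceil_pos.mpr
        have : (0:ℝ) < (m:ℝ) := by exact_mod_cast hm1
        positivity
      have hj'cast : ((j' : ℤ) : ℝ) = ((⌈s * m⌉ : ℤ) : ℝ) := by
        rw [hj', Int.toNat_of_nonneg (by omega)]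
      have hj'1 : 1 ≤ j' := by omega
      have hceil_le : ⌈s * m⌉ ≤ (m : ℤ) := by
        apply Int.ceil_le.mpr
        push_cast
        nlinarith [(Nat.cast_pos (α := ℝ)).mpr hm1]
      have hj'm : j' ≤ m := by omega
      have hm0 : (0:ℝ) < (m:ℝ) := by exact_mod_cast hm1
      have hsm : s * m ≤ (j' : ℝ) := by
        have := Int.le_ceil (s * m)
        rw [← hj'cast] at this
        exact_mod_cast this
      have hmm : (m, j') ∈ T := by
        rw [hT, Finset.mem_filter, Finset.mem_product]
        refine ⟨⟨Finset.mem_Icc.mpr ⟨hm1, hm⟩, Finset.mem_Icc.mpr ⟨hj'1, le_trans hj'm hm⟩⟩,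
          hj'm, ?_⟩
        rw [le_div_iff₀ hm0]
        exact hsm
      have hqle : (p.2:ℝ)/p.1 ≤ (j' : ℝ)/m := by
        rw [hpq, hq]
        exact F.min'_le _ (Finset.mem_image_of_mem _ hmm)
      apply Int.ceil_le.mpr
      rw [← hj'cast]
      push_cast
      rw [div_le_div_iff₀ hi0 hm0] at hqle
      rw [div_mul_eq_mul_div, div_le_iff₀ hi0]
      linarith [hqle]
end aux


set_option maxHeartbeats 1000000 in
lemma w_abs_le {α : ℝ} (hα : 0 < α) {k : ℕ} (hk : ⌈α⌉ = (k:ℤ)) (n : ℕ) :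
    |((upperWord α n : ℤ):ℝ)| ≤ (k:ℝ) := by
  have h1 := upperWord_nonneg hα n
  have h2 := upperWord_le (α := α) n
  rw [hk] at h2
  rw [abs_of_nonneg (by exact_mod_cast h1)]
  exact_mod_cast h2

lemma upperWord_eq_of_match {α α' : ℝ} (hc : ⌈α⌉ = ⌈α'⌉) (n : ℕ)
    (hmatch : ∀ i : ℕ, i ≤ n →
      ⌈(α - ⌈α⌉ + 1) * (i:ℝ)⌉ = ⌈(α' - ⌈α'⌉ + 1) * (i:ℝ)⌉)
    {i : ℕ} (hi : i < n) : upperWord α i = upperWord α' i := by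
  unfold upperWord
  have e1 : ((i:ℝ)+1) = ((i+1 : ℕ):ℝ) := by push_cast; ring
  rw [e1, hmatch (i+1) (by omega), hmatch i (by omega), hc]

open MeasureTheory in
lemma null_piece (Δ : ℝ → ℝ) (hΔ : IsDevilStaircase Δ) (k m : ℕ) (hk : 1 ≤ k) (hm : 1 ≤ m) :
    volume (Δ '' {α | 0 < α ∧ ⌈α⌉ = (k:ℤ) ∧ 1 + (m:ℝ)⁻¹ ≤ Δ α}) = 0 := by
  classical
  set θ : ℝ := (1 + (m:ℝ)⁻¹)⁻¹ with hθ
  have hm0 : (0:ℝ) < m := by exact_mod_cast hm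
  have hk1 : (1:ℝ) ≤ k := by exact_mod_cast hk
  have hθ0 : 0 < θ := by positivity
  have hθ1 : θ < 1 := by
    rw [hθ]
    apply inv_lt_one_of_one_lt₀
    nlinarith [inv_pos.mpr hm0]
  set r : ℕ → ℝ := fun n => ((k:ℝ)+1)^2 * ((k:ℝ) * θ^n * m) with hr
  set A := Δ '' {α | 0 < α ∧ ⌈α⌉ = (k:ℤ) ∧ 1 + (m:ℝ)⁻¹ ≤ Δ α} with hA
  have cover : ∀ n : ℕ, 1 ≤ n →
      A ⊆ ⋃ p ∈ (Finset.Icc 1 n ×ˢ Finset.Icc 1 n : Finset (ℕ × ℕ)),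
        Metric.closedBall (Δ ((k:ℝ) - 1 + (p.2:ℝ)/(p.1:ℝ))) (r n) := by
    intro n hn β hβA
    obtain ⟨α, hαmem, rfl⟩ := hβA
    obtain ⟨hα, hceil, hβε⟩ := hαmem
    obtain ⟨⟨hβ1, hsum⟩, _⟩ := hΔ.2 α hα
    have hwabs : ∀ i, |((upperWord α i : ℤ):ℝ)| ≤ (k:ℝ) := w_abs_le hα hceil
    have hβk : Δ α ≤ (k:ℝ) + 1 := beta_le hβ1 hwabs hsum
    have hs0 : 0 < α - ⌈α⌉ + 1 := slope_pos
    have hs1 : α - ⌈α⌉ + 1 ≤ 1 := slope_le_one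
    obtain ⟨p, hpmem, hq0, hq1, hmatch⟩ := exists_rep hs0 hs1 n hn
    set q : ℝ := (p.2:ℝ)/(p.1:ℝ) with hqdef
    set α' : ℝ := (k:ℝ) - 1 + q with hα'def
    have hα'pos : 0 < α' := by rw [hα'def]; linarith
    have hceil' : ⌈α'⌉ = (k:ℤ) := by
      apply Int.ceil_eq_iff.mpr
      constructor
      · push_cast; rw [hα'def]; linarith
      · push_cast; rw [hα'def]; linarith
    have hslope' : α' - ⌈α'⌉ + 1 = q := by
      rw [hceil', hα'def]; push_cast; ring
    obtain ⟨⟨hβ'1, hsum'⟩, _⟩ := hΔ.2 α' hα'pos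
    have hwabs' : ∀ i, |((upperWord α' i : ℤ):ℝ)| ≤ (k:ℝ) := w_abs_le hα'pos hceil'
    have hβ'k : Δ α' ≤ (k:ℝ) + 1 := beta_le hβ'1 hwabs' hsum'
    have hd : ∀ i, |((upperWord α i:ℤ):ℝ) - ((upperWord α' i:ℤ):ℝ)| ≤ (k:ℝ) := by
      intro i
      have h1 : (0:ℝ) ≤ ((upperWord α i:ℤ):ℝ) := by exact_mod_cast upperWord_nonneg hα i
      have h2 : ((upperWord α i:ℤ):ℝ) ≤ (k:ℝ) := by
        have := upperWord_le (α := α) i; rw [hceil] at this; exact_mod_cast this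
      have h3 : (0:ℝ) ≤ ((upperWord α' i:ℤ):ℝ) := by exact_mod_cast upperWord_nonneg hα'pos i
      have h4 : ((upperWord α' i:ℤ):ℝ) ≤ (k:ℝ) := by
        have := upperWord_le (α := α') i; rw [hceil'] at this; exact_mod_cast this
      rw [abs_sub_le_iff]
      constructor <;> linarith
    have hpre : ∀ i < n, ((upperWord α i:ℤ):ℝ) = ((upperWord α' i:ℤ):ℝ) := by
      intro i hi
      have heq : upperWord α i = upperWord α' i := by
        apply upperWord_eq_of_match (by rw [hceil, hceil']) n _ hi
        intro j hj
        rw [hslope']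
        exact hmatch j hj
      rw [heq]
    have hdiff := tail_diff hβ1 n hwabs hwabs' hd hpre
    rw [hsum] at hdiff
    have hbound : (k:ℝ) * ((Δ α)⁻¹)^n * (Δ α - 1)⁻¹ ≤ (k:ℝ) * θ^n * m := by
      have h1 : (Δ α)⁻¹ ≤ θ := by
        rw [hθ]
        exact inv_anti₀ (by positivity) hβε
      have h2 : (Δ α - 1)⁻¹ ≤ (m:ℝ) := by
        have h3 : (m:ℝ)⁻¹ ≤ Δ α - 1 := by linarith
        calc (Δ α - 1)⁻¹ ≤ ((m:ℝ)⁻¹)⁻¹ := inv_anti₀ (by positivity) h3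
          _ = m := inv_inv _
      have hθn : ((Δ α)⁻¹)^n ≤ θ^n := pow_le_pow_left₀ (by positivity) h1 n
      have hnn1 : (0:ℝ) ≤ (Δ α - 1)⁻¹ := by
        have : (0:ℝ) < Δ α - 1 := by linarith
        positivity
      have h5 : (k:ℝ) * ((Δ α)⁻¹)^n ≤ (k:ℝ) * θ^n := by nlinarith
      exact mul_le_mul h5 h2 hnn1 (by positivity)
    have hg' : |(∑' i:ℕ, ((upperWord α' i:ℤ):ℝ)/(Δ α)^(i+1))
        - ∑' i:ℕ, ((upperWord α' i:ℤ):ℝ)/(Δ α')^(i+1)| ≤ (k:ℝ) * θ^n * m := by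
      rw [hsum', abs_sub_comm]
      exact hdiff.trans hbound
    have hu0' : (1:ℝ) ≤ ((upperWord α' 0 : ℤ):ℝ) := by
      rw [upperWord_zero, hceil']
      exact_mod_cast hk1
    have hupos' : ∀ i, (0:ℝ) ≤ ((upperWord α' i:ℤ):ℝ) := by
      intro i; exact_mod_cast upperWord_nonneg hα'pos i
    have hlip := lipschitz_lower (B := (k:ℝ)+1) hu0' hupos' hwabs' hβ1 hβ'1 hβk hβ'k
    have hfinal : |Δ α - Δ α'| ≤ r n := by
      calc |Δ α - Δ α'| ≤ ((k:ℝ)+1)^2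
            * |(∑' i:ℕ, ((upperWord α' i:ℤ):ℝ)/(Δ α)^(i+1))
              - ∑' i:ℕ, ((upperWord α' i:ℤ):ℝ)/(Δ α')^(i+1)| := hlip
        _ ≤ ((k:ℝ)+1)^2 * ((k:ℝ) * θ^n * m) := by nlinarith [abs_nonneg ((∑' i:ℕ, ((upperWord α' i:ℤ):ℝ)/(Δ α)^(i+1)) - ∑' i:ℕ, ((upperWord α' i:ℤ):ℝ)/(Δ α')^(i+1))]
        _ = r n := rfl
    apply Set.mem_biUnion hpmem
    rw [Metric.mem_closedBall, Real.dist_eq]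
    exact hfinal
  -- measure bound
  have hvol : ∀ n : ℕ, 1 ≤ n →
      volume A ≤ ENNReal.ofReal (((n:ℝ)^2) * (2 * r n)) := by
    intro n hn
    set F : Finset (ℕ × ℕ) := Finset.Icc 1 n ×ˢ Finset.Icc 1 n with hF
    have hcard : F.card = n * n := by
      rw [hF, Finset.card_product, Nat.card_Icc]
      simp
    calc volume A
        ≤ volume (⋃ p ∈ F, Metric.closedBall (Δ ((k:ℝ) - 1 + (p.2:ℝ)/(p.1:ℝ))) (r n)) :=
          measure_mono (cover n hn)
      _ ≤ ∑ p ∈ F, volume (Metric.closedBall (Δ ((k:ℝ) - 1 + (p.2:ℝ)/(p.1:ℝ))) (r n)) :=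
          measure_biUnion_finset_le _ _
      _ = ∑ _p ∈ F, ENNReal.ofReal (2 * r n) := by
          simp [Real.volume_closedBall]
      _ = (F.card : ENNReal) * ENNReal.ofReal (2 * r n) := by
          rw [Finset.sum_const, nsmul_eq_mul]
      _ = ENNReal.ofReal (((n:ℝ)^2) * (2 * r n)) := by
          have hcast : ((F.card : ℕ) : ENNReal) = ENNReal.ofReal ((n:ℝ)^2) := by
            rw [hcard, ← ENNReal.ofReal_natCast]
            congr 1
            push_cast
            ring
          rw [hcast, ← ENNReal.ofReal_mul (by positivity)]
  -- limit
  have hlim : Tendsto (fun n : ℕ => ENNReal.ofReal (((n:ℝ)^2) * (2 * r n))) atTop (nhds 0) := by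
    have h1 : Tendsto (fun n : ℕ => ((n:ℝ)^2) * (2 * r n)) atTop (nhds 0) := by
      have h2 : Summable (fun n : ℕ => ((n:ℝ)^2) * θ^n) := by
        have := summable_pow_mul_geometric_of_norm_lt_one (R := ℝ) 2
          (r := θ) (by rw [Real.norm_eq_abs, abs_of_pos hθ0]; exact hθ1)
        exact this
      have h3 : Tendsto (fun n : ℕ => ((n:ℝ)^2) * θ^n) atTop (nhds 0) :=
        h2.tendsto_atTop_zero
      have h4 := h3.const_mul (2 * ((k:ℝ)+1)^2 * ((k:ℝ) * m))
      simp only [mul_zero] at h4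
      convert h4 using 2 with n
      rw [hr]
      ring
    have := ENNReal.tendsto_ofReal h1
    simpa using this
  have : volume A ≤ 0 :=
    ge_of_tendsto hlim (eventually_atTop.mpr ⟨1, fun n hn => hvol n hn⟩)
  exact le_antisymm this (zero_le)

/-- The image `Δ((0,∞))` has Lebesgue measure zero. -/
theorem devilStaircase_image_measure_zero (Δ : ℝ → ℝ) (hΔ : IsDevilStaircase Δ) :
    MeasureTheory.volume (Δ '' Set.Ioi (0 : ℝ)) = 0 := by
  have hsub : Δ '' Set.Ioi (0:ℝ) ⊆
      ⋃ km : ℕ × ℕ, Δ '' {α | 0 < α ∧ ⌈α⌉ = ((km.1 + 1 : ℕ):ℤ)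
        ∧ 1 + ((km.2 + 1 : ℕ):ℝ)⁻¹ ≤ Δ α} := by
    rintro β ⟨α, hα, rfl⟩
    have hα' : (0:ℝ) < α := hα
    obtain ⟨⟨h1, _⟩, _⟩ := hΔ.2 α hα'
    obtain ⟨m, hm⟩ := exists_nat_one_div_lt (show (0:ℝ) < Δ α - 1 by linarith)
    have hk1 : (1:ℤ) ≤ ⌈α⌉ := ceil_ge_one hα'
    refine Set.mem_iUnion.mpr ⟨(⌈α⌉.toNat - 1, m), ⟨α, ⟨hα', ?_, ?_⟩, rfl⟩⟩
    · push_cast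
      omega
    · rw [one_div] at hm
      push_cast
      push_cast at hm
      linarith
  apply MeasureTheory.measure_mono_null hsub
  apply MeasureTheory.measure_iUnion_null
  intro km
  exact null_piece Δ hΔ (km.1 + 1) (km.2 + 1) (by omega) (by omega)
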